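/- Let s be a strict square root on a pseudo MV-algebra M (i.e., s(0) = s(0)⁻). Then for every x ∈ M: s(x)⁻ ∨ s(x)∼ ≤ s(0), s(0) ⊕ s(x) = s(x) ⊕ s(0) = 1, and every Boolean element b with s(0) ≤ b ≤ 1 equals 1 (provided 0 ≠ 1). -/
import Mathlib


/-- A pseudo MV-algebra `(M; ⊕, ⁻, ∼, 0, 1)` satisfying axioms (A1)–(A8),
with `x ⊙ y := (y⁻ ⊕ x⁻)∼`. -/
class PseudoMV (M : Type*) where
  oplus : M → M → M
  lneg : M → M
  rneg : M → M
  zero : M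
  one : M
  oplus_assoc : ∀ x y z : M, oplus x (oplus y z) = oplus (oplus x y) z
  oplus_zero : ∀ x : M, oplus x zero = x
  zero_oplus : ∀ x : M, oplus zero x = x
  oplus_one : ∀ x : M, oplus x one = one
  one_oplus : ∀ x : M, oplus one x = one
  lneg_one : lneg one = zero
  rneg_one : rneg one = zero
  a5 : ∀ x y : M, rneg (oplus (lneg x) (lneg y)) = lneg (oplus (rneg x) (rneg y))
  a6₁ : ∀ x y : M,
    oplus x (rneg (oplus (lneg y) (lneg (rneg x)))) =
      oplus y (rneg (oplus (lneg x) (lneg (rneg y))))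
  a6₂ : ∀ x y : M,
    oplus x (rneg (oplus (lneg y) (lneg (rneg x)))) =
      oplus (rneg (oplus (lneg (lneg y)) (lneg x))) y
  a6₃ : ∀ x y : M,
    oplus x (rneg (oplus (lneg y) (lneg (rneg x)))) =
      oplus (rneg (oplus (lneg (lneg x)) (lneg y))) x
  a7 : ∀ x y : M,
    rneg (oplus (lneg (oplus (lneg x) y)) (lneg x)) =
      rneg (oplus (lneg y) (lneg (oplus x (rneg y))))
  a8 : ∀ x : M, rneg (lneg x) = x

namespace PseudoMV

variable {M : Type*} [PseudoMV M]

/-- `x ⊙ y := (y⁻ ⊕ x⁻)∼`. -/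
def mul (x y : M) : M := rneg (oplus (lneg y) (lneg x))

/-- `x ∨ y = x ⊕ (x∼ ⊙ y)` (axiom (A6)). -/
def sup (x y : M) : M := oplus x (mul (rneg x) y)

/-- `x ∧ y = x ⊙ (x⁻ ⊕ y)` (axiom (A7)). -/
def inf (x y : M) : M := mul x (oplus (lneg x) y)

/-- The lattice order of a pseudo MV-algebra. -/
def le (x y : M) : Prop := sup x y = y

/-- `x → y := x⁻ ⊕ y`. -/
def arrow (x y : M) : M := oplus (lneg x) y

/-- `x ⇝ y := y ⊕ x∼`. -/
def squig (x y : M) : M := oplus y (rneg x)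

/-- A weak square root: (Sq1) and (Sq2). -/
def IsWeakSqrt (r : M → M) : Prop :=
  (∀ x : M, mul (r x) (r x) = x) ∧
  (∀ x y : M, le (mul y y) x → le y (r x))

/-- A square root: (Sq1), (Sq2) and (Sq3). -/
def IsSqrt (r : M → M) : Prop :=
  IsWeakSqrt r ∧
  (∀ x : M, r (lneg x) = arrow (r x) (r zero) ∧ r (rneg x) = squig (r x) (r zero))

end PseudoMV

namespace PseudoMV

variable {M : Type*} [PseudoMV M]

theorem lneg_rneg (x : M) : lneg (rneg x) = x := by
  have h := a5 x (one : M)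
  rw [lneg_one, rneg_one, oplus_zero, oplus_zero] at h
  rw [← h, a8]

theorem lneg_zero' : (lneg (zero : M)) = one := by
  rw [← rneg_one, lneg_rneg]

theorem rneg_zero' : (rneg (zero : M)) = one := by
  rw [← lneg_one, a8]

theorem lneg_oplus (a b : M) :
    lneg (oplus a b) = rneg (oplus (lneg (lneg a)) (lneg (lneg b))) := by
  have h := a5 (lneg a) (lneg b)
  rw [a8, a8] at h
  exact h.symm

theorem oplus_rneg_self (x : M) : oplus x (rneg x) = one := by
  have h := a6₁ x (one : M)
  rw [lneg_one, zero_oplus, a8, one_oplus] at h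
  exact h

theorem lneg_oplus_self (x : M) : oplus (lneg x) x = one := by
  have h := a6₂ (one : M) x
  rw [one_oplus, lneg_one, oplus_zero, a8] at h
  exact h.symm

theorem sup_comm (x y : M) : sup x y = sup y x := a6₁ x y

theorem sup_eq2 (x y : M) : sup x y = oplus (lneg (oplus y (rneg x))) y := by
  rw [lneg_oplus y (rneg x), lneg_rneg]
  exact a6₂ x y

theorem sup_eq3 (x y : M) : sup x y = oplus (lneg (oplus x (rneg y))) x := by
  rw [lneg_oplus x (rneg y), lneg_rneg]
  exact a6₃ x y

theorem sup_eq4 (x y : M) : sup x y = oplus y (rneg (oplus (lneg x) y)) := by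
  rw [sup_comm]
  show oplus y (rneg (oplus (lneg x) (lneg (rneg y)))) = _
  rw [lneg_rneg]

theorem le_of_lneg (x y : M) (h : oplus (lneg x) y = one) : le x y := by
  unfold le
  rw [sup_eq4, h, rneg_one, oplus_zero]

theorem le_of_rneg (x y : M) (h : oplus y (rneg x) = one) : le x y := by
  unfold le
  rw [sup_eq2, h, lneg_one, zero_oplus]

theorem lneg_of_le {x y : M} (h : le x y) : oplus (lneg x) y = one := by
  unfold le at h
  conv_lhs => rw [← h]
  show oplus (lneg x) (oplus x (mul (rneg x) y)) = one
  rw [oplus_assoc, lneg_oplus_self, one_oplus]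

theorem rneg_of_le {x y : M} (h : le x y) : oplus y (rneg x) = one := by
  have h3 := sup_eq3 x y
  unfold le at h
  rw [h] at h3
  conv_lhs => rw [h3]
  rw [← oplus_assoc, oplus_rneg_self, oplus_one]

theorem le_refl' (x : M) : le x x := le_of_lneg x x (lneg_oplus_self x)

theorem pmv_zero_le (x : M) : le zero x :=
  le_of_lneg zero x (by rw [lneg_zero', one_oplus])

theorem oplus_eq_one_right {p q b : M} (h : le p q) (h1 : oplus b p = one) :
    oplus b q = one := by
  unfold le at h
  conv_lhs => rw [← h]
  show oplus b (oplus p (mul (rneg p) q)) = one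
  rw [oplus_assoc, h1, one_oplus]

theorem oplus_eq_one_left {p q b : M} (h : le p q) (h1 : oplus p b = one) :
    oplus q b = one := by
  have h3 := sup_eq3 p q
  unfold le at h
  rw [h] at h3
  conv_lhs => rw [h3]
  rw [← oplus_assoc, h1, oplus_one]

theorem lneg_antitone {x y : M} (h : le x y) : le (lneg y) (lneg x) :=
  le_of_rneg _ _ (by rw [a8]; exact lneg_of_le h)

theorem rneg_antitone {x y : M} (h : le x y) : le (rneg y) (rneg x) :=
  le_of_lneg _ _ (by rw [lneg_rneg]; exact rneg_of_le h)

theorem oplus_le_oplus_left {a b : M} (c : M) (h : le a b) :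
    le (oplus c a) (oplus c b) := by
  apply le_of_lneg
  have step1 : le (lneg a) (oplus (lneg (oplus c a)) c) := by
    apply le_of_rneg
    rw [a8, ← oplus_assoc]
    exact lneg_oplus_self _
  have step2 := oplus_eq_one_left step1 (lneg_of_le h)
  rw [oplus_assoc]
  exact step2

theorem oplus_le_oplus_right {a b : M} (c : M) (h : le a b) :
    le (oplus a c) (oplus b c) := by
  apply le_of_rneg
  have step1 : le (rneg a) (oplus c (rneg (oplus a c))) := by
    apply le_of_lneg
    rw [lneg_rneg, oplus_assoc]
    exact oplus_rneg_self _
  have step2 := oplus_eq_one_right step1 (rneg_of_le h)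
  rw [← oplus_assoc]
  exact step2

theorem mul_le_mul_left' {v c : M} (p : M) (h : le v c) :
    le (mul p v) (mul p c) := by
  have h1 := oplus_le_oplus_right (lneg p) (lneg_antitone h)
  exact rneg_antitone h1

theorem sup_le_of_le {u v c : M} (hu : le u c) (hv : le v c) :
    le (sup u v) c := by
  have h1 := mul_le_mul_left' (rneg u) hv
  have h2 : le (sup u v) (sup u c) := oplus_le_oplus_left u h1
  have hu' : sup u c = c := hu
  rwa [hu'] at h2

theorem mul_lneg_self (a : M) (h : oplus a a = one) :
    mul (lneg a) (lneg a) = zero := by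
  show rneg (oplus (lneg (lneg a)) (lneg (lneg a))) = zero
  rw [← lneg_oplus, h, lneg_one]

theorem mul_rneg_self (a : M) (h : oplus a a = one) :
    mul (rneg a) (rneg a) = zero := by
  show rneg (oplus (lneg (rneg a)) (lneg (rneg a))) = zero
  rw [lneg_rneg, h, rneg_one]

end PseudoMV

open PseudoMV

theorem stmt14 {M : Type*} [PseudoMV M] (s : M → M) (hs : IsSqrt s)
    (hstrict : s zero = lneg (s zero)) :
    (∀ x : M, le (sup (lneg (s x)) (rneg (s x))) (s zero) ∧
      oplus (s zero) (s x) = one ∧ oplus (s x) (s zero) = one) ∧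
    ((zero : M) ≠ one →
      ∀ b : M, oplus b b = b → le (s zero) b → le b one → b = one) := by

  obtain ⟨⟨sq1, sq2⟩, _sq3⟩ := hs
  have hs0le : ∀ x : M, le (s zero) (s x) := fun x =>
    sq2 x (s zero) (by rw [sq1 zero]; exact pmv_zero_le x)
  have hlneg0 : lneg (s zero) = s zero := hstrict.symm
  have hrneg0 : rneg (s zero) = s zero := by
    conv_lhs => rw [hstrict]
    exact a8 _
  have h1 : ∀ x : M, oplus (s zero) (s x) = one := fun x => by
    have h := lneg_of_le (hs0le x)
    rwa [hlneg0] at h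
  have h2 : ∀ x : M, oplus (s x) (s zero) = one := fun x => by
    have h := rneg_of_le (hs0le x)
    rwa [hrneg0] at h
  have hxx : ∀ x : M, oplus (s x) (s x) = one := fun x =>
    oplus_eq_one_right (hs0le x) (h2 x)
  have hu : ∀ x : M, le (lneg (s x)) (s zero) := fun x =>
    sq2 zero (lneg (s x)) (by rw [mul_lneg_self (s x) (hxx x)]; exact le_refl' zero)
  have hv : ∀ x : M, le (rneg (s x)) (s zero) := fun x =>
    sq2 zero (rneg (s x)) (by rw [mul_rneg_self (s x) (hxx x)]; exact le_refl' zero)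
  refine ⟨fun x => ⟨sup_le_of_le (hu x) (hv x), h1 x, h2 x⟩, ?_⟩
  intro _ b hbool hs0b _
  have h00 : oplus (s zero) (s zero) = one := by
    have h := lneg_oplus_self (s zero)
    rwa [hlneg0] at h
  have hb1 : oplus b (s zero) = one := oplus_eq_one_left hs0b h00
  have hbb : oplus b b = one := oplus_eq_one_right hs0b hb1
  exact hbool.symm.trans hbb
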